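/- The group GL_5(F_2) of invertible 5×5 matrices over the field with 2 elements contains no subgroup isomorphic to PSL_2(F_8) = SL_2(F_8), the group of 2×2 matrices of determinant 1 over the field with 8 elements. -/

import Mathlib

open Polynomial

private lemma q_irred_aux : Irreducible (X^6 + X^3 + 1 : (ZMod 2)[X]) := by
  have hqm : (X^6 + X^3 + 1 : (ZMod 2)[X]).Monic := by monicity!
  have hdq : (X^6 + X^3 + 1 : (ZMod 2)[X]).natDegree = 6 := by compute_degree!
  set q : (ZMod 2)[X] := X^6 + X^3 + 1 with hq
  have hq0 : q ≠ 0 := hqm.ne_zero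
  have hqnu : ¬ IsUnit q := by
    intro h
    have := natDegree_eq_zero_of_isUnit h
    omega
  obtain ⟨f, hfi, hfd⟩ := WfDvdMonoid.exists_irreducible_factor hqnu hq0
  have hf0 : f ≠ 0 := hfi.ne_zero
  have hf1 : 1 ≤ f.natDegree := hfi.natDegree_pos
  haveI := Fact.mk hfi
  set K := AdjoinRoot f
  letI : Fintype K := Module.fintypeOfFintype (AdjoinRoot.powerBasis hf0).basis
  have hcard : Fintype.card K = 2 ^ f.natDegree := by
    rw [Module.card_fintype (AdjoinRoot.powerBasis hf0).basis]
    simp [AdjoinRoot.powerBasis, ZMod.card, Fintype.card_fin]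
    exact Fintype.card_fin _
  set l : K := AdjoinRoot.root f
  have hql : l^6 + l^3 + 1 = 0 := by
    obtain ⟨c, hc⟩ := hfd
    have : (Polynomial.aeval l) q = 0 := by
      rw [hc, map_mul, AdjoinRoot.aeval_eq, AdjoinRoot.mk_self, zero_mul]
    simpa [hq] using this
  have h2K : (1 : K) + 1 = 0 := by
    calc (1:K) + 1 = algebraMap (ZMod 2) K (1 + 1) := by push_cast; ring
    _ = 0 := by rw [show (1+1 : ZMod 2) = 0 by decide, map_zero]
  have h9 : l ^ 9 = 1 := by linear_combination (l^3 - 1) * hql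
  have h3 : l ^ 3 ≠ 1 := by
    intro h
    rw [show l^6 = (l^3)^2 by ring, h] at hql
    norm_num at hql
    exact one_ne_zero (by linear_combination hql - h2K : (1:K) = 0)
  have hord : orderOf l = 9 := by
    have := orderOf_eq_prime_pow (p := 3) (n := 1) (by simpa using h3) (by simpa using h9)
    simpa using this
  have hl0 : l ≠ 0 := by
    intro h; rw [h] at h9; norm_num at h9
  have hdvd9 : 9 ∣ 2 ^ f.natDegree - 1 := by
    rw [← hord, ← hcard]
    exact orderOf_dvd_of_pow_eq_one (FiniteField.pow_card_sub_one_eq_one l hl0)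
  have hfdeg_le : f.natDegree ≤ 6 := hdq ▸ natDegree_le_of_dvd hfd hq0
  have hfdeg : f.natDegree = 6 := by
    rcases Nat.lt_or_ge f.natDegree 6 with h | h
    · exfalso
      interval_cases hd : f.natDegree <;> exact absurd hdvd9 (by decide)
    · omega
  obtain ⟨c, hc⟩ := hfd
  have hc0 : c ≠ 0 := by rintro rfl; simp at hc; exact hq0 hc
  have hcdeg : c.natDegree = 0 := by
    have := natDegree_mul hf0 hc0
    rw [← hc, hdq, hfdeg] at this
    omega
  have hcu : IsUnit c :=
    isUnit_iff_degree_eq_zero.mpr (by rw [degree_eq_natDegree hc0, hcdeg]; rfl)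
  exact (Associated.irreducible ⟨hcu.unit, hc.symm⟩ hfi)

private lemma cube_eq_one_of_pow_nine (A : Matrix (Fin 5) (Fin 5) (ZMod 2))
    (h : A ^ 9 = 1) : A ^ 3 = 1 := by
  set m := minpoly (ZMod 2) A with hm
  have hdvd : m ∣ X^9 - 1 := minpoly.dvd _ _ (by simp [h])
  have hfac : (X^9 - 1 : (ZMod 2)[X]) = (X^3 - 1) * (X^6 + X^3 + 1) := by ring
  have hmdeg : m.natDegree ≤ 5 := by
    have h1 := Matrix.minpoly_dvd_charpoly A
    have h2 : (Matrix.charpoly A).natDegree = 5 := by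
      rw [Matrix.charpoly_natDegree_eq_dim]; simp
    calc m.natDegree ≤ (Matrix.charpoly A).natDegree :=
          natDegree_le_of_dvd h1 (Matrix.charpoly_monic A).ne_zero
    _ = 5 := h2
  have hnd : ¬ (X^6 + X^3 + 1 : (ZMod 2)[X]) ∣ m := by
    intro hd
    have hm0 : m ≠ 0 := minpoly.ne_zero (Matrix.isIntegral A)
    have := natDegree_le_of_dvd hd hm0
    have h6 : (X^6 + X^3 + 1 : (ZMod 2)[X]).natDegree = 6 := by compute_degree!
    omega
  have hcop : IsCoprime (X^6 + X^3 + 1 : (ZMod 2)[X]) m :=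
    (Irreducible.coprime_iff_not_dvd q_irred_aux).mpr hnd
  have hdvd3 : m ∣ X^3 - 1 := by
    refine hcop.symm.dvd_of_dvd_mul_right ?_
    rw [← hfac]; exact hdvd
  have : Polynomial.aeval A (X^3 - 1 : (ZMod 2)[X]) = 0 := by
    obtain ⟨c, hc⟩ := hdvd3
    rw [hc, map_mul, minpoly.aeval, zero_mul]
  have : A^3 - 1 = 0 := by simpa using this
  rwa [sub_eq_zero] at this

private lemma exists_order_nine :
    ∃ M : Matrix.SpecialLinearGroup (Fin 2) (GaloisField 2 3),
      M ^ 9 = 1 ∧ M ^ 3 ≠ 1 := by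
  have h2F : (2 : GaloisField 2 3) = 0 := by
    have := CharP.cast_eq_zero (GaloisField 2 3) 2
    exact_mod_cast this
  obtain ⟨t, ht⟩ : ∃ t : GaloisField 2 3, t^3 + t + 1 = 0 := by
    have h2 : (2 : (ZMod 2)[X]) = 0 := by
      have h := map_ofNat (Polynomial.C : ZMod 2 →+* (ZMod 2)[X]) 2
      have h2' : (2 : ZMod 2) = 0 := by decide
      rw [h2'] at h
      simpa using h.symm
    have hdvd : (X^3 + X + 1 : (ZMod 2)[X]) ∣ (X ^ (2^3) - X) := by
      refine ⟨X^5 + X^3 + X^2 + X, ?_⟩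
      linear_combination (-(X^6 + X^5 + X^4 + X^3 + X^2 + X) : (ZMod 2)[X]) * h2
    have hne : (X ^ (2^3) - X : (ZMod 2)[X]) ≠ 0 := by
      have : (X ^ (2^3) - X : (ZMod 2)[X]).Monic := by monicity!
      exact this.ne_zero
    have hspf : Splits ((X^3 + X + 1 : (ZMod 2)[X]).map
        (algebraMap (ZMod 2) (GaloisField 2 3))) :=
      (SplittingField.splits _).of_dvd (Polynomial.map_ne_zero hne) (Polynomial.map_dvd _ hdvd)
    have hdeg : (X^3 + X + 1 : (ZMod 2)[X]).degree ≠ 0 := by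
      rw [show (X^3 + X + 1 : (ZMod 2)[X]).degree = 3 by compute_degree!]
      decide
    obtain ⟨t, ht⟩ := hspf.exists_eval_eq_zero (by rwa [degree_map])
    exact ⟨t, by simpa using ht⟩
  have key3 : (!![0,1;1,t] : Matrix (Fin 2) (Fin 2) (GaloisField 2 3))^3
      = !![t, t^2+1; t^2+1, t+1] := by
    rw [pow_succ, pow_succ, pow_one, Matrix.mul_fin_two, Matrix.mul_fin_two]
    ext i j
    fin_cases i <;> fin_cases j <;> simp
    · ring
    · ring
    · linear_combination ht - h2F
  have key9 : (!![0,1;1,t] : Matrix (Fin 2) (Fin 2) (GaloisField 2 3))^9 = 1 := by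
    rw [show (9:ℕ) = 3*3 from rfl, pow_mul, key3]
    rw [pow_succ, pow_succ, pow_one, Matrix.mul_fin_two, Matrix.mul_fin_two,
      Matrix.one_fin_two]
    ext i j
    fin_cases i <;> fin_cases j <;> simp
    · linear_combination (3*t^2+t+4)*ht + (-t^2-t-2)*h2F
    · linear_combination (t^3+5*t+2)*ht + (t^2-2*t)*h2F
    · linear_combination (t^3+5*t+2)*ht + (t^2-2*t)*h2F
    · linear_combination (3*t^2+2*t+4)*ht + (t^2-1)*h2F
  have hdet : (!![0,1;1,t] : Matrix (Fin 2) (Fin 2) (GaloisField 2 3)).det = 1 := by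
    rw [Matrix.det_fin_two_of]
    linear_combination -h2F
  refine ⟨(⟨!![0,1;1,t], hdet⟩ : Matrix.SpecialLinearGroup (Fin 2) (GaloisField 2 3)), ?_, ?_⟩
  · apply Subtype.ext
    refine (Matrix.SpecialLinearGroup.coe_pow (A := (⟨!![0,1;1,t], hdet⟩ : Matrix.SpecialLinearGroup (Fin 2) (GaloisField 2 3))) (m := 9)).trans ?_
    exact key9
  · intro h
    have hco : (!![0,1;1,t] : Matrix (Fin 2) (Fin 2) (GaloisField 2 3))^3 = 1 := by
      have := congrArg
        (fun A : Matrix.SpecialLinearGroup (Fin 2) (GaloisField 2 3) =>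
          (A : Matrix (Fin 2) (Fin 2) (GaloisField 2 3))) h
      exact (Matrix.SpecialLinearGroup.coe_pow (A := (⟨!![0,1;1,t], hdet⟩ : Matrix.SpecialLinearGroup (Fin 2) (GaloisField 2 3))) (m := 3)).symm.trans this
    rw [key3] at hco
    have h01 : t^2 + 1 = 0 := by
      have := congrFun (congrFun hco 0) 1
      simpa [Matrix.one_apply] using this
    have htp1 : (t + 1)^2 = 0 := by linear_combination h01 + t*h2F
    have ht10 : t + 1 = 0 := pow_eq_zero_iff (n := 2) (by norm_num) |>.mp htp1
    exact one_ne_zero (by linear_combination (t^2 - t + 2)*ht10 - ht : (1 : GaloisField 2 3) = 0)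

/-- `GL₅(F₂)` contains no subgroup isomorphic to `PSL₂(F₈) = SL₂(F₈)`. -/
theorem stmt_14 (H : Subgroup (Matrix.GeneralLinearGroup (Fin 5) (ZMod 2))) :
    ¬ Nonempty (H ≃* Matrix.SpecialLinearGroup (Fin 2) (GaloisField 2 3)) := by
  rintro ⟨e⟩
  obtain ⟨M, hM9, hM3⟩ := exists_order_nine
  set x : H := e.symm M with hx
  have hx9 : x ^ 9 = 1 := by rw [hx, ← map_pow, hM9, map_one]
  have hx3 : x ^ 3 ≠ 1 := by
    intro h
    apply hM3
    have : e (x ^ 3) = e 1 := congrArg e h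
    rw [map_pow, map_one, hx, MulEquiv.apply_symm_apply] at this
    exact this
  apply hx3
  -- move to GL and then to matrices
  have hg9 : ((x : Matrix.GeneralLinearGroup (Fin 5) (ZMod 2)) : Matrix (Fin 5) (Fin 5) (ZMod 2)) ^ 9 = 1 := by
    have h1 : ((x : Matrix.GeneralLinearGroup (Fin 5) (ZMod 2))) ^ 9 = 1 := by
      rw [← SubmonoidClass.coe_pow, hx9, OneMemClass.coe_one]
    calc ((x : Matrix.GeneralLinearGroup (Fin 5) (ZMod 2)) : Matrix (Fin 5) (Fin 5) (ZMod 2)) ^ 9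
        = (((x : Matrix.GeneralLinearGroup (Fin 5) (ZMod 2)) ^ 9 : Matrix.GeneralLinearGroup (Fin 5) (ZMod 2)) : Matrix (Fin 5) (Fin 5) (ZMod 2)) := by
          rw [Units.val_pow_eq_pow_val]
    _ = 1 := by rw [h1, Units.val_one]
  have hg3 : ((x : Matrix.GeneralLinearGroup (Fin 5) (ZMod 2)) : Matrix (Fin 5) (Fin 5) (ZMod 2)) ^ 3 = 1 :=
    cube_eq_one_of_pow_nine _ hg9
  have hgu3 : (x : Matrix.GeneralLinearGroup (Fin 5) (ZMod 2)) ^ 3 = 1 := by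
    apply Units.ext
    rw [Units.val_pow_eq_pow_val, hg3, Units.val_one]
  exact Subtype.ext (by rw [SubmonoidClass.coe_pow, hgu3, OneMemClass.coe_one])
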